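/- arXiv:1201.2980 — 2 statements merged into one kernel-verified Lean document; each statement's English description precedes it below -/
import Mathlib

section
/- Combination axiom: for soft sets (F,A) and (G,B) over U and any S with A ⊆ S ⊆ A ∪ B, ((F,A) ⊓ε (G,B))↓S = (F,A) ⊓ε (G,B)↓(S ∩ B). -/
open scoped Classical

/-- A soft set over a universe `U` with parameter set `E`: a domain `A ⊆ E` together with
a map `F` giving, for each parameter in the domain, a subset of `U`.  Values outside the
domain are normalized to `∅`, so that Lean equality coincides with equality of the
parameter set together with the mapping on it. -/
@[ext]
structure SoftSet (U E : Type*) where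
  dom : Set E
  F : E → Set U
  zero : ∀ e ∉ dom, F e = ∅

/-- Extended intersection `(F,A) ⊓ε (G,B)`: domain `A ∪ B`, with values `F e` on `A \ B`,
`G e` on `B \ A`, and `F e ∩ G e` on `A ∩ B`. -/
noncomputable def extInter {U E : Type*} (s t : SoftSet U E) : SoftSet U E where
  dom := s.dom ∪ t.dom
  F := fun e =>
    if e ∈ s.dom then (if e ∈ t.dom then s.F e ∩ t.F e else s.F e)
    else if e ∈ t.dom then t.F e else ∅
  zero := by
    intro e he
    rw [Set.mem_union, not_or] at he
    simp [he.1, he.2]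

/-- Projection `(F,A)↓B`: restriction of the mapping to `B`. -/
noncomputable def proj {U E : Type*} (s : SoftSet U E) (B : Set E) : SoftSet U E where
  dom := B
  F := fun e => if e ∈ B then s.F e else ∅
  zero := by intro e he; simp [he]

/-- The absolute soft set `Ã` with domain `A`: every parameter in `A` is sent to `U`. -/
noncomputable def absSoft (U : Type*) {E : Type*} (A : Set E) : SoftSet U E where
  dom := A
  F := fun e => if e ∈ A then Set.univ else ∅
  zero := by intro e he; simp [he]

/-- The induced order on soft sets: `(F,A) ≤ (G,B)` iff `A ⊆ B` and `G e ⊆ F e` for all `e ∈ A`. -/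
def sle {U E : Type*} (s t : SoftSet U E) : Prop :=
  s.dom ⊆ t.dom ∧ ∀ e ∈ s.dom, t.F e ⊆ s.F e

theorem combination_axiom {U E : Type*} (s t : SoftSet U E) (S : Set E)
    (h1 : s.dom ⊆ S) (h2 : S ⊆ s.dom ∪ t.dom) :
    proj (extInter s t) S = extInter s (proj t (S ∩ t.dom)) := by
  have hdom : s.dom ∪ S ∩ t.dom = S := by
    apply Set.Subset.antisymm
    · exact Set.union_subset h1 Set.inter_subset_left
    · intro e he
      rcases h2 he with h | h
      · exact Or.inl h
      · exact Or.inr ⟨he, h⟩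
  ext e x
  · simp only [proj, extInter, hdom]
  · simp only [proj, extInter, Set.mem_inter_iff]
    by_cases hs : e ∈ s.dom
    · have hS : e ∈ S := h1 hs
      by_cases ht : e ∈ t.dom <;> simp [hS, hs, ht]
    · by_cases hS : e ∈ S <;> by_cases ht : e ∈ t.dom <;>
        simp [hS, hs, ht, s.zero e, t.zero e]
end

section
/- The extended intersection of two soft sets is their least upper bound: for soft sets (F,A) and (G,B) over U, (F,A) ⊓ε (G,B) is the supremum of {(F,A),(G,B)} with respect to the order (F,A) ≤ (G,B) iff A ⊆ B and G(e) ⊆ F(e) for all e ∈ A. -/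
open scoped Classical

theorem extInter_isLUB_pair {U E : Type*} (s t : SoftSet U E) :
    sle s (extInter s t) ∧ sle t (extInter s t) ∧
    (∀ w : SoftSet U E, sle s w → sle t w → sle (extInter s t) w) := by
  refine ⟨⟨Set.subset_union_left, ?_⟩, ⟨Set.subset_union_right, ?_⟩, ?_⟩
  · intro e he
    simp only [extInter, he, if_true]
    split <;> simp [Set.inter_subset_left]
  · intro e he
    simp only [extInter, he, if_true]
    split <;> simp [Set.inter_subset_right]
  · rintro w ⟨hs, hsF⟩ ⟨ht, htF⟩
    refine ⟨Set.union_subset hs ht, ?_⟩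
    intro e he
    simp only [extInter]
    split
    · split
      · exact Set.subset_inter (hsF e ‹_›) (htF e ‹_›)
      · exact hsF e ‹_›
    · split
      · exact htF e ‹_›
      · rcases he with h|h <;> [exact absurd h ‹_›; exact absurd h ‹_›]
end
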